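/- arXiv:1912.12552 — 3 statements merged into one kernel-verified Lean document; each statement's English description precedes it below -/
import Mathlib

section
/- For all c > 0 and a, b ∈ ℝ, the absolute value of (2π)^{-1/2} ∫_ℝ e^{i k b} e^{-k²(c + i a)} dk equals e^{-c b²/(4(a²+c²))} / (4(a²+c²))^{1/4}. -/
open Complex MeasureTheory

/-- For `c > 0` and `a, b ∈ ℝ`, the absolute value of
`(2π)^{-1/2} ∫_ℝ e^{ikb} e^{-k²(c+ia)} dk` equals
`e^{-cb²/(4(a²+c²))} / (4(a²+c²))^{1/4}`. -/
theorem abs_gaussian_fourier (a b c : ℝ) (hc : 0 < c) :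
    ‖((1 / Real.sqrt (2 * Real.pi) : ℝ) *
        ∫ k : ℝ, Complex.exp (Complex.I * k * b) *
          Complex.exp (-(k : ℂ) ^ 2 * (c + Complex.I * a)))‖ =
      Real.exp (-(c * b ^ 2) / (4 * (a ^ 2 + c ^ 2))) /
        (4 * (a ^ 2 + c ^ 2)) ^ ((1 : ℝ) / 4) := by
  have hs : (0:ℝ) < a ^ 2 + c ^ 2 := by positivity
  have hre : 0 < ((c : ℂ) + Complex.I * a).re := by simp [hc]
  have hint : (∫ k : ℝ, Complex.exp (Complex.I * k * b) *
      Complex.exp (-(k : ℂ) ^ 2 * (c + Complex.I * a))) =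
      (↑Real.pi / ((c:ℂ) + Complex.I * a)) ^ (1 / 2 : ℂ) *
        Complex.exp (-(b:ℂ) ^ 2 / (4 * ((c:ℂ) + Complex.I * a))) := by
    rw [← fourierIntegral_gaussian hre (b : ℂ)]
    congr 1; ext k
    rw [show Complex.I * k * b = Complex.I * b * k by ring,
        show -(k:ℂ) ^ 2 * (c + Complex.I * a) = -((c:ℂ) + Complex.I * a) * k ^ 2 by ring]
  rw [hint]
  have hB : ‖(c:ℂ) + Complex.I * a‖ = Real.sqrt (a ^ 2 + c ^ 2) := by
    rw [Complex.norm_def, Complex.normSq_apply]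
    simp; ring_nf
  have hrepart : (-(b:ℂ) ^ 2 / (4 * ((c:ℂ) + Complex.I * a))).re =
      -(c * b ^ 2) / (4 * (a ^ 2 + c ^ 2)) := by
    rw [Complex.div_re]
    have h16 : c ^ 2 * 16 + a ^ 2 * 16 ≠ 0 := by positivity
    simp [Complex.normSq_apply, ← Complex.ofReal_pow]
    have e : (c ^ 2 * 16 + a ^ 2 * 16)⁻¹ * (c ^ 2 * 16 + a ^ 2 * 16) = 1 :=
      inv_mul_cancel₀ h16
    field_simp
    ring
  rw [norm_mul, norm_mul, Complex.norm_exp, hrepart,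
      show (1/2 : ℂ) = ((1/2 : ℝ) : ℂ) by norm_num,
      Complex.norm_cpow_real, norm_div, hB]
  simp only [Complex.norm_real, Real.norm_eq_abs]
  rw [abs_of_pos Real.pi_pos, abs_of_pos (by positivity)]
  have h2 : Real.sqrt (2 * Real.pi) = 2 ^ ((1:ℝ)/2) * Real.pi ^ ((1:ℝ)/2) := by
    rw [Real.sqrt_eq_rpow, Real.mul_rpow (by norm_num) Real.pi_pos.le]
  have h3 : (Real.pi / Real.sqrt (a^2+c^2)) ^ ((1:ℝ)/2)
      = Real.pi ^ ((1:ℝ)/2) / (a^2+c^2) ^ ((1:ℝ)/4) := by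
    rw [Real.div_rpow Real.pi_pos.le (Real.sqrt_nonneg _), Real.sqrt_eq_rpow,
        ← Real.rpow_mul hs.le]
    norm_num
  have h4 : (4 * (a^2+c^2)) ^ ((1:ℝ)/4) = 2 ^ ((1:ℝ)/2) * (a^2+c^2) ^ ((1:ℝ)/4) := by
    rw [Real.mul_rpow (by norm_num) hs.le,
        show (4:ℝ) = 2 ^ (2:ℝ) by
          rw [show (2:ℝ) = ((2:ℕ):ℝ) by norm_num, Real.rpow_natCast]; norm_num,
        ← Real.rpow_mul (by norm_num)]
    norm_num
  rw [h2, h3, h4]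
  have e1 : (0:ℝ) < Real.pi ^ ((1:ℝ)/2) := Real.rpow_pos_of_pos Real.pi_pos _
  have e2 : (0:ℝ) < (2:ℝ) ^ ((1:ℝ)/2) := Real.rpow_pos_of_pos (by norm_num) _
  have e3 : (0:ℝ) < (a^2+c^2) ^ ((1:ℝ)/4) := Real.rpow_pos_of_pos hs _
  field_simp
end

section
/- For η > 0 and y > 0, the modified Bessel function of the second kind satisfies 0 ≤ K_η(y) ≤ (4^η / y^η) e^{-y/4} Γ(η). -/
open MeasureTheory Real

/-- The modified Bessel function of the second kind,
`K_η(y) = ∫_0^∞ e^{-y cosh t} cosh(η t) dt`. -/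
noncomputable def besselK (η y : ℝ) : ℝ :=
  ∫ t in Set.Ioi (0 : ℝ), Real.exp (-(y * Real.cosh t)) * Real.cosh (η * t)

/-- For `η > 0` and `y > 0`, `0 ≤ K_η(y) ≤ (4^η / y^η) e^{-y/4} Γ(η)`. -/
theorem besselK_nonneg_and_le (η y : ℝ) (hη : 0 < η) (hy : 0 < y) :
    0 ≤ besselK η y ∧
      besselK η y ≤ (4 ^ η / y ^ η) * Real.exp (-y / 4) * Real.Gamma η := by
  set c : ℝ := y / 4 with hc
  have hcpos : 0 < c := by positivity
  -- the comparison function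
  set H : ℝ → ℝ := fun t => Real.exp (-(c * Real.exp t)) * Real.exp (η * t) with hH
  -- H is integrable on Ioi 0
  have hHbound : ∀ t : ℝ, 0 ≤ t → H t ≤ Real.exp ((η + 1) ^ 2 / c) * Real.exp (-t) := by
    intro t ht
    simp only [hH]
    rw [← Real.exp_add, ← Real.exp_add]
    apply Real.exp_le_exp.2
    have h1 : t ^ 2 / 4 ≤ Real.exp t := by
      have h2 : t / 2 ≤ Real.exp (t / 2) := (Real.add_one_le_exp _).trans' (by linarith)
      have h3 : Real.exp (t / 2) * Real.exp (t / 2) = Real.exp t := by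
        rw [← Real.exp_add]; ring_nf
      nlinarith [Real.exp_pos (t / 2)]
    have key : c * (t ^ 2 / 4) ≤ c * Real.exp t := by
      exact mul_le_mul_of_nonneg_left h1 hcpos.le
    have h4 : (η + 1) ^ 2 / c * c = (η + 1) ^ 2 := div_mul_cancel₀ _ hcpos.ne'
    nlinarith [key, sq_nonneg (c * t - 2 * (η + 1)), h4, hcpos, mul_nonneg hcpos.le ht]
  have hHcont : Continuous H :=
    (Real.continuous_exp.comp (continuous_const.mul Real.continuous_exp).neg).mul
      (Real.continuous_exp.comp (continuous_const.mul continuous_id))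
  have hHint : IntegrableOn H (Set.Ioi (0 : ℝ)) := by
    apply Integrable.mono' ((exp_neg_integrableOn_Ioi 0 one_pos).const_mul
      (Real.exp ((η + 1) ^ 2 / c)))
    · exact hHcont.aestronglyMeasurable.restrict
    · filter_upwards [self_mem_ae_restrict measurableSet_Ioi] with t ht
      rw [Real.norm_eq_abs, abs_of_nonneg (by positivity)]
      simpa using hHbound t (le_of_lt ht)
  -- change of variables: ∫ H = c^(-η) * ∫_{Ioi c} exp(-u) u^(η-1)
  have hrpow : ∀ t : ℝ, (c * Real.exp t) ^ η = c ^ η * Real.exp (η * t) := by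
    intro t
    rw [Real.mul_rpow hcpos.le (Real.exp_pos t).le, Real.rpow_def_of_pos (Real.exp_pos t),
      Real.log_exp, mul_comm t η]
  have hsub : ∫ t in Set.Ioi (0 : ℝ), H t
      = c ^ (-η) * ∫ u in Set.Ioi c, Real.exp (-u) * u ^ (η - 1) := by
    have himg : ∀ s : Set ℝ, (fun t => c * Real.exp t) '' s ⊆ Set.Ioi 0 := by
      intro s u hu
      obtain ⟨t, _, rfl⟩ := hu
      exact mul_pos hcpos (Real.exp_pos t)
    have := MeasureTheory.integral_comp_mul_deriv_Ioi
      (f := fun t => c * Real.exp t) (f' := fun t => c * Real.exp t)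
      (g := fun u => Real.exp (-u) * u ^ (η - 1)) (a := 0)
      (Real.continuous_exp.continuousOn.const_smul c)
      (Real.tendsto_exp_atTop.const_mul_atTop hcpos)
      (fun x _ => ((Real.hasDerivAt_exp x).const_mul c).hasDerivWithinAt)
      ?_ ?_ ?_
    · have heq : ∀ t ∈ Set.Ioi (0:ℝ),
          ((fun u => Real.exp (-u) * u ^ (η - 1)) ∘ fun t => c * Real.exp t) t
            * (c * Real.exp t) = c ^ η * H t := by
        intro t _
        have hpos : (0:ℝ) < c * Real.exp t := mul_pos hcpos (Real.exp_pos t)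
        simp only [Function.comp]
        rw [hH]
        have : (c * Real.exp t) ^ (η - 1) * (c * Real.exp t) = (c * Real.exp t) ^ η := by
          rw [← Real.rpow_add_one hpos.ne' (η - 1)]; ring_nf
        calc Real.exp (-(c * Real.exp t)) * (c * Real.exp t) ^ (η - 1) * (c * Real.exp t)
            = Real.exp (-(c * Real.exp t)) * ((c * Real.exp t) ^ (η-1) * (c * Real.exp t)) := by
              ring
          _ = Real.exp (-(c * Real.exp t)) * (c * Real.exp t) ^ η := by rw [this]
          _ = c ^ η * (Real.exp (-(c * Real.exp t)) * Real.exp (η * t)) := by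
              rw [hrpow t]; ring
      rw [setIntegral_congr_fun measurableSet_Ioi heq] at this
      rw [integral_const_mul] at this
      simp only [Real.exp_zero, mul_one] at this
      have hcη : (0:ℝ) < c ^ η := Real.rpow_pos_of_pos hcpos η
      rw [← this, Real.rpow_neg hcpos.le, inv_mul_cancel_left₀ hcη.ne']
    · apply ContinuousOn.mul
      · exact (Real.continuous_exp.comp continuous_neg).continuousOn
      · intro u hu
        have : u ∈ Set.Ioi (0:ℝ) := himg _ hu
        exact (Real.continuousAt_rpow_const u (η-1) (Or.inl (ne_of_gt this))).continuousWithinAt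
    · exact (Real.GammaIntegral_convergent hη).mono_set (himg _)
    · rw [integrableOn_Ici_iff_integrableOn_Ioi]
      have heq : ∀ t ∈ Set.Ioi (0:ℝ),
          ((fun u => Real.exp (-u) * u ^ (η - 1)) ∘ fun t => c * Real.exp t) t
            * (c * Real.exp t) = c ^ η * H t := by
        intro t _
        have hpos : (0:ℝ) < c * Real.exp t := mul_pos hcpos (Real.exp_pos t)
        simp only [Function.comp]
        rw [hH]
        have h5 : (c * Real.exp t) ^ (η - 1) * (c * Real.exp t) = (c * Real.exp t) ^ η := by
          rw [← Real.rpow_add_one hpos.ne' (η - 1)]; ring_nf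
        calc Real.exp (-(c * Real.exp t)) * (c * Real.exp t) ^ (η - 1) * (c * Real.exp t)
            = Real.exp (-(c * Real.exp t)) * ((c * Real.exp t) ^ (η-1) * (c * Real.exp t)) := by
              ring
          _ = Real.exp (-(c * Real.exp t)) * (c * Real.exp t) ^ η := by rw [h5]
          _ = c ^ η * (Real.exp (-(c * Real.exp t)) * Real.exp (η * t)) := by
              rw [hrpow t]; ring
      exact (IntegrableOn.congr_fun (hHint.const_mul (c ^ η))
        (fun t ht => (heq t ht).symm) measurableSet_Ioi)
  -- bound the tail Gamma integral by Gamma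
  have htail : ∫ u in Set.Ioi c, Real.exp (-u) * u ^ (η - 1) ≤ Real.Gamma η := by
    rw [Real.Gamma_eq_integral hη]
    apply setIntegral_mono_set (Real.GammaIntegral_convergent hη)
    · filter_upwards [self_mem_ae_restrict measurableSet_Ioi] with u hu
      have hu' : (0:ℝ) < u := hu
      positivity
    · exact HasSubset.Subset.eventuallyLE (Set.Ioi_subset_Ioi hcpos.le)
  -- pointwise bound of the Bessel integrand
  have hpt : ∀ t ∈ Set.Ioi (0:ℝ),
      Real.exp (-(y * Real.cosh t)) * Real.cosh (η * t) ≤ Real.exp (-c) * H t := by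
    intro t ht
    have ht0 : (0:ℝ) < t := ht
    have h1 : Real.cosh (η * t) ≤ Real.exp (η * t) := by
      rw [Real.cosh_eq]
      have : Real.exp (-(η * t)) ≤ Real.exp (η * t) :=
        Real.exp_le_exp.2 (by nlinarith)
      linarith
    have h2 : Real.exp (-(y * Real.cosh t)) ≤ Real.exp (-c) * Real.exp (-(c * Real.exp t)) := by
      rw [← Real.exp_add]
      apply Real.exp_le_exp.2
      rw [Real.cosh_eq]
      have he1 : (1:ℝ) ≤ Real.exp t := Real.one_le_exp ht0.le
      have he2 : (0:ℝ) < Real.exp (-t) := Real.exp_pos _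
      have hcy : y = 4 * c := by rw [hc]; ring
      nlinarith
    calc Real.exp (-(y * Real.cosh t)) * Real.cosh (η * t)
        ≤ (Real.exp (-c) * Real.exp (-(c * Real.exp t))) * Real.exp (η * t) := by
          apply mul_le_mul h2 h1 (Real.cosh_pos _).le (by positivity)
      _ = Real.exp (-c) * H t := by rw [hH]; ring
  -- integrability of the Bessel integrand
  have hGint : IntegrableOn (fun t => Real.exp (-c) * H t) (Set.Ioi (0:ℝ)) :=
    hHint.const_mul _
  have hFint : IntegrableOn
      (fun t => Real.exp (-(y * Real.cosh t)) * Real.cosh (η * t)) (Set.Ioi (0:ℝ)) := by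
    apply Integrable.mono' hGint
    · exact ((Real.continuous_exp.comp (continuous_const.mul Real.continuous_cosh).neg).mul
        (Real.continuous_cosh.comp (continuous_const.mul continuous_id))).aestronglyMeasurable.restrict
    · filter_upwards [self_mem_ae_restrict measurableSet_Ioi] with t ht
      rw [Real.norm_eq_abs, abs_of_nonneg
        (mul_nonneg (Real.exp_pos _).le (Real.cosh_pos _).le)]
      exact hpt t ht
  constructor
  · apply setIntegral_nonneg measurableSet_Ioi
    intro t _
    exact mul_nonneg (Real.exp_pos _).le (Real.cosh_pos _).le
  · have hstep : besselK η y ≤ Real.exp (-c) * ∫ t in Set.Ioi (0:ℝ), H t := by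
      rw [besselK, ← integral_const_mul]
      exact setIntegral_mono_on hFint hGint measurableSet_Ioi hpt
    have hcη : (0:ℝ) < c ^ (-η) := Real.rpow_pos_of_pos hcpos _
    have hfin : Real.exp (-c) * ∫ t in Set.Ioi (0:ℝ), H t
        ≤ c ^ (-η) * Real.exp (-c) * Real.Gamma η := by
      rw [hsub]
      calc Real.exp (-c) * (c ^ (-η) * ∫ u in Set.Ioi c, Real.exp (-u) * u ^ (η - 1))
          ≤ Real.exp (-c) * (c ^ (-η) * Real.Gamma η) := by
            apply mul_le_mul_of_nonneg_left _ (Real.exp_pos _).le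
            exact mul_le_mul_of_nonneg_left htail hcη.le
        _ = c ^ (-η) * Real.exp (-c) * Real.Gamma η := by ring
    have hceq : c ^ (-η) = 4 ^ η / y ^ η := by
      rw [Real.rpow_neg hcpos.le, hc, Real.div_rpow hy.le (by norm_num : (0:ℝ) ≤ 4), inv_div]
    have hexpeq : Real.exp (-c) = Real.exp (-y / 4) := by rw [hc]; ring_nf
    calc besselK η y ≤ Real.exp (-c) * ∫ t in Set.Ioi (0:ℝ), H t := hstep
      _ ≤ c ^ (-η) * Real.exp (-c) * Real.Gamma η := hfin
      _ = (4 ^ η / y ^ η) * Real.exp (-y / 4) * Real.Gamma η := by rw [hceq, hexpeq]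
end

section
/- Let G_a(x) = e^{-a|x|} on ℝ^d with a > 0. There exists a constant D₃ > 0 depending only on d such that for every n ≥ 2, the (n-1)-fold convolution satisfies (G_a * G_a * ⋯ * G_a)(x) ≤ (D₃/a^d)^n · a^d · e^{-a|x|/4} for all x ∈ ℝ^d. -/
open MeasureTheory Real

/-- `iterConv d a n` is the convolution of `n + 1` copies of `G_a(x) = e^{-a|x|}` on `ℝ^d`
(i.e. `n` convolutions). -/
noncomputable def iterConv (d : ℕ) (a : ℝ) : ℕ → (EuclideanSpace ℝ (Fin d) → ℝ)
  | 0 => fun x => Real.exp (-(a * ‖x‖))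
  | n + 1 => fun x => ∫ z : EuclideanSpace ℝ (Fin d),
      iterConv d a n (x - z) * Real.exp (-(a * ‖z‖))

lemma integrable_exp_neg_mul_norm_aux (d : ℕ) {c : ℝ} (hc : 0 < c) :
    Integrable (fun z : EuclideanSpace ℝ (Fin d) => Real.exp (-(c * ‖z‖))) := by
  have hfin : (Module.finrank ℝ (EuclideanSpace ℝ (Fin d)) : ℝ) < (d : ℝ) + 1 := by
    simp [finrank_euclideanSpace]
  have hint := integrable_one_add_norm
    (μ := (volume : Measure (EuclideanSpace ℝ (Fin d)))) hfin
  set s : ℝ := c / (d + 1) with hs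
  have hs0 : 0 < s := by positivity
  set m : ℝ := min 1 s with hm
  have hm0 : 0 < m := lt_min one_pos hs0
  refine (hint.const_mul (m ^ (d + 1))⁻¹).mono' ?_
    (Filter.Eventually.of_forall fun z => ?_)
  · exact (Real.continuous_exp.comp
      (continuous_const.mul continuous_norm).neg).aestronglyMeasurable
  · set t : ℝ := ‖z‖ with ht
    have ht0 : 0 ≤ t := norm_nonneg _
    have h1t : (0:ℝ) < 1 + t := by linarith
    have key : m * (1 + t) ≤ Real.exp (s * t) := by
      have h1 : m ≤ 1 := min_le_left _ _
      have h2 : m * t ≤ s * t := mul_le_mul_of_nonneg_right (min_le_right _ _) ht0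
      have h3 : s * t + 1 ≤ Real.exp (s * t) := Real.add_one_le_exp _
      nlinarith
    have key2 : m ^ (d + 1) * (1 + t) ^ (d + 1) ≤ Real.exp (c * t) := by
      have := pow_le_pow_left₀ (by positivity) key (d + 1)
      rw [mul_pow] at this
      refine this.trans_eq ?_
      rw [← Real.exp_nat_mul]
      congr 1
      have : ((d : ℝ) + 1) ≠ 0 := by positivity
      field_simp [hs]
      rw [hs]
      push_cast
      field_simp
    have hpos : (0:ℝ) < m ^ (d + 1) * (1 + t) ^ (d + 1) := by positivity
    have hinv : Real.exp (-(c * t)) ≤ (m ^ (d + 1) * (1 + t) ^ (d + 1))⁻¹ := by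
      rw [Real.exp_neg]
      exact inv_anti₀ hpos key2
    have hrw : (1 + t) ^ (-((d : ℝ) + 1)) = ((1 + t) ^ (d + 1))⁻¹ := by
      rw [Real.rpow_neg h1t.le]
      norm_cast
    rw [Real.norm_eq_abs, abs_of_pos (Real.exp_pos _)]
    calc Real.exp (-(c * t)) ≤ (m ^ (d + 1) * (1 + t) ^ (d + 1))⁻¹ := hinv
      _ = (m ^ (d + 1))⁻¹ * ((1 + t) ^ (d + 1))⁻¹ := by rw [mul_inv]
      _ = (m ^ (d + 1))⁻¹ * (1 + t) ^ (-((d : ℝ) + 1)) := by rw [hrw]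

lemma iterConv_nonneg (d : ℕ) (a : ℝ) (n : ℕ) :
    ∀ x, 0 ≤ iterConv d a n x := by
  induction n with
  | zero => intro x; exact (Real.exp_pos _).le
  | succ n ih =>
    intro x
    exact integral_nonneg fun z => mul_nonneg (ih _) (Real.exp_pos _).le

lemma iterConv_le (d : ℕ) {a : ℝ} (ha : 0 < a) (n : ℕ) :
    ∀ x, iterConv d a n x ≤
      (∫ z : EuclideanSpace ℝ (Fin d), Real.exp (-(3 * a / 4 * ‖z‖))) ^ n
        * Real.exp (-(a * ‖x‖) / 4) := by
  set K : ℝ := ∫ z : EuclideanSpace ℝ (Fin d), Real.exp (-(3 * a / 4 * ‖z‖)) with hK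
  have hK0 : 0 ≤ K := integral_nonneg fun z => (Real.exp_pos _).le
  induction n with
  | zero =>
    intro x
    simp only [iterConv, pow_zero, one_mul]
    rw [Real.exp_le_exp]
    have := norm_nonneg x
    nlinarith
  | succ n ih =>
    intro x
    have hstep : iterConv d a (n + 1) x ≤
        ∫ z : EuclideanSpace ℝ (Fin d),
          (K ^ n * Real.exp (-(a * ‖x‖) / 4)) * Real.exp (-(3 * a / 4 * ‖z‖)) := by
      refine integral_mono_of_nonneg
        (Filter.Eventually.of_forall fun z =>
          mul_nonneg (iterConv_nonneg d a n _) (Real.exp_pos _).le)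
        (((integrable_exp_neg_mul_norm_aux d (by positivity : (0:ℝ) < 3 * a / 4)).const_mul
          _))
        (Filter.Eventually.of_forall fun z => ?_)
      have h1 : iterConv d a n (x - z) * Real.exp (-(a * ‖z‖)) ≤
          (K ^ n * Real.exp (-(a * ‖x - z‖) / 4)) * Real.exp (-(a * ‖z‖)) :=
        mul_le_mul_of_nonneg_right (ih _) (Real.exp_pos _).le
      have h2 : Real.exp (-(a * ‖x - z‖) / 4) * Real.exp (-(a * ‖z‖)) ≤
          Real.exp (-(a * ‖x‖) / 4) * Real.exp (-(3 * a / 4 * ‖z‖)) := by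
        rw [← Real.exp_add, ← Real.exp_add, Real.exp_le_exp]
        have htri : ‖x‖ ≤ ‖x - z‖ + ‖z‖ := by
          calc ‖x‖ = ‖(x - z) + z‖ := by rw [sub_add_cancel]
            _ ≤ ‖x - z‖ + ‖z‖ := norm_add_le _ _
        nlinarith [norm_nonneg z, mul_le_mul_of_nonneg_left htri ha.le]
      show iterConv d a n (x - z) * Real.exp (-(a * ‖z‖)) ≤
        K ^ n * Real.exp (-(a * ‖x‖) / 4) * Real.exp (-(3 * a / 4 * ‖z‖))
      refine h1.trans ?_
      rw [mul_assoc, mul_assoc]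
      exact mul_le_mul_of_nonneg_left h2 (pow_nonneg hK0 n)
    calc iterConv d a (n + 1) x ≤ _ := hstep
      _ = (K ^ n * Real.exp (-(a * ‖x‖) / 4)) * K := by rw [integral_const_mul]
      _ = K ^ (n + 1) * Real.exp (-(a * ‖x‖) / 4) := by ring

/-- Let `G_a(x) = e^{-a|x|}` on `ℝ^d`, `a > 0`. There is a constant `D₃ > 0` depending only
on `d` such that for every `n ≥ 2` the `(n−1)`-fold convolution of `n` copies of `G_a`
satisfies `(G_a * ⋯ * G_a)(x) ≤ (D₃/a^d)^n a^d e^{-a|x|/4}`. -/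
theorem iterConv_exp_le (d : ℕ) (hd : 1 ≤ d) :
    ∃ D₃ : ℝ, 0 < D₃ ∧ ∀ a : ℝ, 0 < a → ∀ n : ℕ, 2 ≤ n → ∀ x : EuclideanSpace ℝ (Fin d),
      iterConv d a (n - 1) x ≤ (D₃ / a ^ d) ^ n * a ^ d * Real.exp (-(a * ‖x‖) / 4) := by
  set C : ℝ := ∫ z : EuclideanSpace ℝ (Fin d), Real.exp (-‖z‖) with hC
  have hC0 : 0 ≤ C := integral_nonneg fun z => (Real.exp_pos _).le
  refine ⟨max 1 ((4 / 3) ^ d * C), lt_of_lt_of_le one_pos (le_max_left _ _), ?_⟩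
  intro a ha n hn x
  set D₃ : ℝ := max 1 ((4 / 3) ^ d * C) with hD
  have hD1 : (1:ℝ) ≤ D₃ := le_max_left _ _
  have hD0 : (0:ℝ) < D₃ := lt_of_lt_of_le one_pos hD1
  set K : ℝ := ∫ z : EuclideanSpace ℝ (Fin d), Real.exp (-(3 * a / 4 * ‖z‖)) with hK
  have hR : (0:ℝ) < 3 * a / 4 := by positivity
  -- scaling: K = (4/3)^d * C / a^d
  have hscale := Measure.integral_comp_smul_of_nonneg
    (μ := (volume : Measure (EuclideanSpace ℝ (Fin d))))
    (fun z : EuclideanSpace ℝ (Fin d) => Real.exp (-‖z‖)) (3 * a / 4) (hR := hR.le)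
  have hKeq : K = ((3 * a / 4) ^ d)⁻¹ * C := by
    rw [hK]
    calc ∫ z : EuclideanSpace ℝ (Fin d), Real.exp (-(3 * a / 4 * ‖z‖))
        = ∫ z : EuclideanSpace ℝ (Fin d),
            (fun z : EuclideanSpace ℝ (Fin d) => Real.exp (-‖z‖)) ((3 * a / 4) • z) := by
          congr 1
          ext z
          show Real.exp (-(3 * a / 4 * ‖z‖)) = Real.exp (-‖(3 * a / 4) • z‖)
          rw [norm_smul, Real.norm_eq_abs, abs_of_pos hR]
      _ = ((3 * a / 4) ^ d)⁻¹ * C := by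
          rw [hscale, finrank_euclideanSpace, Fintype.card_fin, smul_eq_mul, hC]
  have hKeq2 : K = (4 / 3) ^ d * C / a ^ d := by
    rw [hKeq]
    have h34 : ((4:ℝ) / 3) ^ d * (3 * a / 4) ^ d = a ^ d := by
      rw [← mul_pow]
      congr 1
      field_simp
      try ring
    have hne : ((3 * a / 4) ^ d : ℝ) ≠ 0 := by positivity
    have hane : (a ^ d : ℝ) ≠ 0 := by positivity
    rw [← h34]
    field_simp
    try ring
  have hbound := iterConv_le d ha (n - 1) x
  rw [← hK] at hbound
  refine hbound.trans ?_
  refine mul_le_mul_of_nonneg_right ?_ (Real.exp_pos _).le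
  -- goal: K ^ (n-1) ≤ (D₃ / a^d)^n * a^d
  have hP : (0:ℝ) < a ^ d := by positivity
  have hn1 : n - 1 + 1 = n := by omega
  have hnum : ((4:ℝ) / 3) ^ d * C ≤ D₃ := le_max_right _ _
  have h1 : K ^ (n - 1) = ((4 / 3) ^ d * C) ^ (n - 1) / (a ^ d) ^ (n - 1) := by
    rw [hKeq2, div_pow]
  have h2 : (((4:ℝ) / 3) ^ d * C) ^ (n - 1) ≤ D₃ ^ n :=
    (pow_le_pow_left₀ (by positivity) hnum (n - 1)).trans
      (pow_le_pow_right₀ hD1 (Nat.sub_le n 1))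
  have h3 : (D₃ / a ^ d) ^ n * a ^ d = D₃ ^ n / (a ^ d) ^ (n - 1) := by
    rw [div_pow, ← hn1, pow_succ]
    field_simp
    try ring
    rw [Nat.add_sub_cancel_left]
  rw [h1, h3]
  exact (div_le_div_iff_of_pos_right (by positivity)).mpr h2
end
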